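/- Let N, q be natural numbers with N ≥ 1 and q ≤ N. The following are equivalent: (i) for all d, d̄ ∈ ℝ and all attack vectors η_a, η_b : Fin N → ℝ with supports of cardinality at most q, the equality d + η_a(i) = d̄ + η_b(i) for all i ∈ Fin N implies d = d̄; (ii) 2q < N. (Theorem 1: d is reconstructible from N sensor readings under q attacks if and only if q < N/2.) -/

import Mathlib

/-- **Theorem 1.** The true value `d` is reconstructible from the `N` sensor
readings under `q` sensor attacks if and only if `q < N / 2`, i.e. `2 * q < N`. -/
theorem reconstructible_iff_two_mul_lt
    (N q : ℕ) (hN : 1 ≤ N) (hqN : q ≤ N) :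
    (∀ (d d' : ℝ) (ηa ηb : Fin N → ℝ),
        (Finset.univ.filter fun i => ηa i ≠ 0).card ≤ q →
        (Finset.univ.filter fun i => ηb i ≠ 0).card ≤ q →
        (∀ i : Fin N, d + ηa i = d' + ηb i) →
        d = d') ↔ 2 * q < N := by
  constructor
  · intro h
    by_contra hlt
    push_neg at hlt
    set ηa : Fin N → ℝ := fun i => if (i : ℕ) < q then 1 else 0 with hηa
    set ηb : Fin N → ℝ := fun i => if (i : ℕ) < q then 0 else -1 with hηb
    have ha : (Finset.univ.filter fun i => ηa i ≠ 0).card ≤ q := by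
      have hsub : (Finset.univ.filter fun i => ηa i ≠ 0) ⊆
          (Finset.univ.filter fun i : Fin N => (i : ℕ) < q) := by
        intro i hi
        simp only [Finset.mem_filter, Finset.mem_univ, true_and, hηa] at hi ⊢
        by_contra hc
        simp [hc] at hi
      calc (Finset.univ.filter fun i => ηa i ≠ 0).card
          ≤ (Finset.univ.filter fun i : Fin N => (i : ℕ) < q).card :=
            Finset.card_le_card hsub
        _ ≤ (Finset.range q).card := by
            refine Finset.card_le_card_of_injOn (fun i => (i : ℕ)) ?_ ?_
            · intro i hi
              simp only [Finset.mem_coe, Finset.mem_filter] at hi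
              simpa using hi.2
            · intro a _ b _ hab
              exact Fin.val_injective hab
        _ = q := Finset.card_range q
    have hb : (Finset.univ.filter fun i => ηb i ≠ 0).card ≤ q := by
      have hsub : (Finset.univ.filter fun i => ηb i ≠ 0) ⊆
          (Finset.univ.filter fun i : Fin N => ¬ (i : ℕ) < q) := by
        intro i hi
        simp only [Finset.mem_filter, Finset.mem_univ, true_and, hηb] at hi ⊢
        intro hc
        simp [hc] at hi
      calc (Finset.univ.filter fun i => ηb i ≠ 0).card
          ≤ (Finset.univ.filter fun i : Fin N => ¬ (i : ℕ) < q).card :=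
            Finset.card_le_card hsub
        _ ≤ (Finset.range (N - q)).card := by
            refine Finset.card_le_card_of_injOn (fun i => (i : ℕ) - q) ?_ ?_
            · intro i hi
              simp only [Finset.mem_coe, Finset.mem_filter, Finset.mem_univ, true_and, not_lt] at hi
              have := i.isLt
              simp only [Finset.mem_coe, Finset.mem_range]
              omega
            · intro a ha' b hb' hab
              simp only [Finset.coe_filter, Set.mem_setOf_eq, Finset.mem_univ, true_and] at ha' hb'
              apply Fin.val_injective
              have hab' : (a : ℕ) - q = (b : ℕ) - q := hab
              omega
        _ = N - q := Finset.card_range _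
        _ ≤ q := by omega
    have := h 0 1 ηa ηb ha hb (by
      intro i
      simp only [hηa, hηb]
      by_cases hc : (i : ℕ) < q <;> simp [hc])
    norm_num at this
  · intro h2 d d' ηa ηb ha hb heq
    by_contra hne
    have key : Finset.univ ⊆ (Finset.univ.filter fun i => ηa i ≠ 0) ∪
        (Finset.univ.filter fun i => ηb i ≠ 0) := by
      intro i _
      simp only [Finset.mem_union, Finset.mem_filter, Finset.mem_univ, true_and]
      by_contra hc
      push_neg at hc
      obtain ⟨h1, h2'⟩ := hc
      have := heq i
      rw [h1, h2'] at this
      simp at this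
      exact hne this
    have hcard := Finset.card_le_card key
    have hun := Finset.card_union_le (Finset.univ.filter fun i => ηa i ≠ 0)
      (Finset.univ.filter fun i => ηb i ≠ 0)
    simp only [Finset.card_univ, Fintype.card_fin] at hcard
    omega
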